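/- Fix integers a, b ≥ 1 and m ≥ 1. Let Y be the multigraph consisting of two vertices u, v joined by m internally disjoint paths of length a and m internally disjoint paths of length b (all interior vertices distinct). Then the number of spanning trees of Y equals (a + b) · m · (ab)^{m−1}. In particular, for the degree-p^n branched cyclic cover of a cycle of length a + b totally ramified at the two distinguished vertices (with trivial voltage assignment), the number of spanning trees of the n-th layer equals (a+b) · p^n · (ab)^{p^n − 1}. -/

import Mathlib

structure Multigraph where
  V : Type
  E : Type
  [fintypeV : Fintype V]
  [fintypeE : Fintype E]
  [decEqV : DecidableEq V]
  ends : E → Sym2 V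

attribute [instance] Multigraph.fintypeV Multigraph.fintypeE Multigraph.decEqV

namespace Multigraph

variable (G : Multigraph)

/-- Reachability in the spanning subgraph using only the edges in `S`. -/
def Reach (S : Set G.E) : G.V → G.V → Prop :=
  Relation.ReflTransGen (fun x y => ∃ e ∈ S, G.ends e = s(x, y))

/-- The multigraph is connected. -/
def Connected : Prop := ∀ x y : G.V, G.Reach Set.univ x y

/-- The edge set `S` is acyclic: every edge of `S` is a bridge of `S`. -/
def IsForest (S : Finset G.E) : Prop :=
  ∀ e ∈ S, ∀ x y : G.V, G.ends e = s(x, y) → ¬ G.Reach ((↑S : Set G.E) \ {e}) x y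

/-- `S` is the edge set of a spanning tree. -/
def IsSpanningTree (S : Finset G.E) : Prop :=
  G.IsForest S ∧ ∀ x y : G.V, G.Reach ↑S x y

/-- `S` is the edge set of a spanning 2-forest consisting of two trees, one
containing `u`, the other containing `v`, whose vertex sets partition the vertices. -/
def IsTwoForest (u v : G.V) (S : Finset G.E) : Prop :=
  G.IsForest S ∧ ¬ G.Reach ↑S u v ∧ ∀ x : G.V, G.Reach ↑S u x ∨ G.Reach ↑S v x

/-- The number of spanning trees. -/
noncomputable def treeCount : ℕ :=
  Nat.card {S : Finset G.E // G.IsSpanningTree S}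

/-- The number of spanning 2-forests separating `u` and `v`. -/
noncomputable def twoForestCount (u v : G.V) : ℕ :=
  Nat.card {S : Finset G.E // G.IsTwoForest u v S}

end Multigraph

/-- The `j`-th node along the `i`-th path of a generalized theta graph. -/
def thetaNode (N : ℕ) (ℓ : Fin N → ℕ) (i : Fin N) (j : ℕ) (hj : j ≤ ℓ i) :
    Bool ⊕ (Σ i : Fin N, Fin (ℓ i - 1)) :=
  if h0 : j = 0 then Sum.inl false
  else if hl : j = ℓ i then Sum.inl true
  else Sum.inr ⟨i, ⟨j - 1, by omega⟩⟩

/-- The generalized theta graph: two vertices `u = Sum.inl false` and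
`v = Sum.inl true` joined by `N` internally disjoint paths, the `i`-th of length
`ℓ i`. -/
def theta (N : ℕ) (ℓ : Fin N → ℕ) : Multigraph where
  V := Bool ⊕ (Σ i : Fin N, Fin (ℓ i - 1))
  E := Σ i : Fin N, Fin (ℓ i)
  ends := fun e =>
    s(thetaNode N ℓ e.1 e.2.1 (Nat.le_of_lt e.2.isLt),
      thetaNode N ℓ e.1 (e.2.1 + 1) e.2.isLt)

/-- The multigraph consisting of two vertices `u`, `v` joined by `m` internally disjoint
paths of length `a` and `m` internally disjoint paths of length `b`. -/
def doubleTheta (a b m : ℕ) : Multigraph :=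
  theta (m + m) (fun i => if i.1 < m then a else b)

-- === auxiliary development ===

lemma Multigraph.reach_symm (G : Multigraph) (S : Set G.E) {x y : G.V}
    (h : G.Reach S x y) : G.Reach S y x :=
  (@Relation.ReflTransGen.symmetric _ _
    ⟨fun _ _ h' => h'.elim fun e he => ⟨e, he.1, he.2.trans (Sym2.eq_swap)⟩⟩).symm _ _ h

lemma Multigraph.reach_invariant (G : Multigraph) (S : Set G.E) (P : G.V → Prop)
    (hP : ∀ e ∈ S, ∀ x y : G.V, G.ends e = s(x, y) → (P x ↔ P y)) {x y : G.V}
    (h : G.Reach S x y) : P x ↔ P y := by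
  induction h with
  | refl => exact Iff.rfl
  | tail _ hstep ih =>
      obtain ⟨e, he, hee⟩ := hstep
      exact ih.trans (hP e he _ _ hee)

namespace ThetaAux

variable {N : ℕ} {ℓ : Fin N → ℕ}

lemma thetaNode_zero (i : Fin N) (h : 0 ≤ ℓ i) :
    thetaNode N ℓ i 0 h = Sum.inl false := by simp [thetaNode]

lemma thetaNode_last (i : Fin N) (h : ℓ i ≤ ℓ i) (hpos : 0 < ℓ i) :
    thetaNode N ℓ i (ℓ i) h = Sum.inl true := by
  unfold thetaNode
  rw [dif_neg (by omega), dif_pos rfl]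

lemma thetaNode_mid (i : Fin N) {s : ℕ} (h1 : 0 < s) (h2 : s < ℓ i) (h : s ≤ ℓ i) :
    thetaNode N ℓ i s h = Sum.inr ⟨i, ⟨s - 1, by omega⟩⟩ := by
  unfold thetaNode
  rw [dif_neg (by omega), dif_neg (by omega)]

/-- The `Pfun` invariant on vertices from an index predicate. -/
def Pfun (good : Fin N → ℕ → Prop) (bu bv : Prop) :
    Bool ⊕ (Σ i : Fin N, Fin (ℓ i - 1)) → Prop
  | Sum.inl false => bu
  | Sum.inl true => bv
  | Sum.inr ⟨i, t⟩ => good i (t.1 + 1)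

lemma Pfun_node (good : Fin N → ℕ → Prop) (bu bv : Prop)
    (hu : ∀ i, good i 0 ↔ bu) (hv : ∀ i, good i (ℓ i) ↔ bv)
    (i : Fin N) (s : ℕ) (hs : s ≤ ℓ i) :
    Pfun (ℓ := ℓ) good bu bv (thetaNode N ℓ i s hs) ↔ good i s := by
  unfold thetaNode
  split_ifs with h0 hl
  · subst h0; show bu ↔ good i 0; exact (hu i).symm
  · subst hl; show bv ↔ good i (ℓ i); exact (hv i).symm
  · show good i (s - 1 + 1) ↔ good i s
    have hss : s - 1 + 1 = s := by omega
    rw [hss]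

lemma theta_invariant (S : Set (theta N ℓ).E) (good : Fin N → ℕ → Prop) (bu bv : Prop)
    (hu : ∀ i, good i 0 ↔ bu) (hv : ∀ i, good i (ℓ i) ↔ bv)
    (hstep : ∀ e ∈ S, (good e.1 e.2.1 ↔ good e.1 (e.2.1 + 1)))
    {x y : (theta N ℓ).V} (h : (theta N ℓ).Reach S x y) :
    Pfun (ℓ := ℓ) good bu bv x ↔ Pfun (ℓ := ℓ) good bu bv y := by
  refine (theta N ℓ).reach_invariant S _ ?_ h
  rintro e he a c hec
  have h1 : Pfun (ℓ := ℓ) good bu bv (thetaNode N ℓ e.1 e.2.1 (Nat.le_of_lt e.2.isLt)) ↔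
      Pfun (ℓ := ℓ) good bu bv (thetaNode N ℓ e.1 (e.2.1 + 1) e.2.isLt) := by
    rw [Pfun_node good bu bv hu hv, Pfun_node good bu bv hu hv]
    exact hstep e he
  have : s(thetaNode N ℓ e.1 e.2.1 (Nat.le_of_lt e.2.isLt),
      thetaNode N ℓ e.1 (e.2.1 + 1) e.2.isLt) = s(a, c) := hec
  replace this := Sym2.eq_iff.mp this
  rcases this with ⟨rfl, rfl⟩ | ⟨rfl, rfl⟩
  · exact h1
  · exact h1.symm

lemma theta_reach_seg (S : Set (theta N ℓ).E) (i : Fin N) (s : ℕ) :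
    ∀ t, s ≤ t → ∀ (hs : s ≤ ℓ i) (ht : t ≤ ℓ i),
      (∀ j (hj : j < ℓ i), s ≤ j → j < t → (⟨i, ⟨j, hj⟩⟩ : (theta N ℓ).E) ∈ S) →
      (theta N ℓ).Reach S (thetaNode N ℓ i s hs)
        (thetaNode N ℓ i t ht) := by
  intro t hst
  induction t, hst using Nat.le_induction with
  | base => intro hs ht _; exact Relation.ReflTransGen.refl
  | succ t hst ih =>
      intro hs ht hS
      have ht' : t ≤ ℓ i := by omega
      have r1 := ih hs ht' (fun j hj h1 h2 => hS j hj h1 (by omega))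
      refine Relation.ReflTransGen.tail r1 ?_
      exact ⟨⟨i, ⟨t, by omega⟩⟩, hS t (by omega) hst (by omega), rfl⟩

end ThetaAux

namespace ThetaAux

variable {N : ℕ} {ℓ : Fin N → ℕ}

/-- Separation with one gap per path. -/
lemma sep1 (gap : Fin N → ℕ) (hgap : ∀ k, gap k < ℓ k) (S : Set (theta N ℓ).E)
    (hS : ∀ e ∈ S, e.2.1 ≠ gap e.1) {i1 i2 : Fin N} {s t : ℕ}
    (hs : s ≤ ℓ i1) (ht : t ≤ ℓ i2)
    (h : (theta N ℓ).Reach S (thetaNode N ℓ i1 s hs) (thetaNode N ℓ i2 t ht)) :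
    (s ≤ gap i1 ↔ t ≤ gap i2) := by
  have key := theta_invariant S (fun k s => s ≤ gap k) True False
    (fun i => by simp)
    (fun i => by have := hgap i; constructor <;> intro h' <;> [omega; exact h'.elim])
    (fun e he => by have h1 := hS e he; have h2 := e.2.isLt; constructor <;> intro <;> omega)
    h
  rwa [Pfun_node _ _ _ (fun i => by simp)
      (fun i => by have := hgap i; constructor <;> intro h' <;> [omega; exact h'.elim]),
    Pfun_node _ _ _ (fun i => by simp)
      (fun i => by have := hgap i; constructor <;> intro h' <;> [omega; exact h'.elim])] at key

/-- Separation with two gaps on path `i` (full elsewhere allowed). -/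
lemma sep2 (i : Fin N) (g1 g2 : ℕ) (h12 : g1 < g2) (h2 : g2 < ℓ i)
    (S : Set (theta N ℓ).E)
    (hS : ∀ e ∈ S, e.1 = i → e.2.1 ≠ g1 ∧ e.2.1 ≠ g2) {i1 i2 : Fin N} {s t : ℕ}
    (hs : s ≤ ℓ i1) (ht : t ≤ ℓ i2)
    (h : (theta N ℓ).Reach S (thetaNode N ℓ i1 s hs) (thetaNode N ℓ i2 t ht)) :
    ((i1 = i ∧ g1 < s ∧ s ≤ g2) ↔ (i2 = i ∧ g1 < t ∧ t ≤ g2)) := by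
  have hu : ∀ k, (fun k s => k = i ∧ g1 < s ∧ s ≤ g2) k 0 ↔ False := fun k => by
    constructor
    · rintro ⟨rfl, hA, hB⟩; omega
    · exact False.elim
  have hv : ∀ k, (fun k s => k = i ∧ g1 < s ∧ s ≤ g2) k (ℓ k) ↔ False := fun k => by
    constructor
    · rintro ⟨rfl, hA, hB⟩; omega
    · exact False.elim
  have key := theta_invariant S (fun k s => k = i ∧ g1 < s ∧ s ≤ g2) False False hu hv
    (fun e he => by
      by_cases hei : e.1 = i
      · have := hS e he hei
        simp only [hei, true_and]
        omega
      · simp only [hei, false_and]) h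
  rwa [Pfun_node _ _ _ hu hv, Pfun_node _ _ _ hu hv] at key

end ThetaAux

namespace ThetaAux

variable {N : ℕ} {ℓ : Fin N → ℕ}

def treeSet (i₀ : Fin N) (c : Fin N → ℕ) : Finset (theta N ℓ).E :=
  Finset.univ.filter (fun e => e.1 = i₀ ∨ e.2.1 ≠ c e.1)

lemma mem_treeSet {i₀ : Fin N} {c : Fin N → ℕ} {e : (theta N ℓ).E} :
    e ∈ (treeSet i₀ c : Finset (theta N ℓ).E) ↔ (e.1 = i₀ ∨ e.2.1 ≠ c e.1) := by
  simp [treeSet]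

/-- Every vertex reaches `u = Sum.inl false` in `treeSet i₀ c`. -/
lemma treeSet_reach_u (hl : ∀ i, 0 < ℓ i) (i₀ : Fin N) (c : Fin N → ℕ)
    (x : (theta N ℓ).V) :
    (theta N ℓ).Reach ↑(treeSet i₀ c : Finset (theta N ℓ).E) x (Sum.inl false) := by
  set S : Set (theta N ℓ).E := ↑(treeSet i₀ c : Finset (theta N ℓ).E) with hSdef
  have hmem : ∀ (e : (theta N ℓ).E), (e.1 = i₀ ∨ e.2.1 ≠ c e.1) → e ∈ S := by
    intro e he; rw [hSdef]; exact Finset.mem_coe.2 (mem_treeSet.2 he)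
  -- reach from v to u along path i₀
  have rv : (theta N ℓ).Reach S (Sum.inl true) (Sum.inl false) := by
    have := theta_reach_seg S i₀ 0 (ℓ i₀) (Nat.zero_le _) (Nat.zero_le _) le_rfl
      (fun j hj _ _ => hmem ⟨i₀, ⟨j, hj⟩⟩ (Or.inl rfl))
    rw [thetaNode_zero, thetaNode_last _ _ (hl i₀)] at this
    exact (theta N ℓ).reach_symm _ this
  match x with
  | Sum.inl false => exact Relation.ReflTransGen.refl
  | Sum.inl true => exact rv
  | Sum.inr ⟨i, t⟩ =>
      have hts : t.1 + 1 ≤ ℓ i := by have := t.isLt; omega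
      have hxeq : (Sum.inr ⟨i, t⟩ : (theta N ℓ).V) = thetaNode N ℓ i (t.1 + 1) hts := by
        rw [thetaNode_mid i (by omega) (by have := t.isLt; omega)]
        congr 1
      rw [hxeq]
      by_cases hcase : i = i₀ ∨ t.1 + 1 ≤ c i
      · -- walk down to u
        have := theta_reach_seg S i 0 (t.1 + 1) (Nat.zero_le _) (Nat.zero_le _) hts
          (fun j hj _ hjt => hmem ⟨i, ⟨j, hj⟩⟩ (by
            rcases hcase with h | h
            · exact Or.inl h
            · exact Or.inr (by simp only; omega)))
        rw [thetaNode_zero] at this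
        exact (theta N ℓ).reach_symm _ this
      · push_neg at hcase
        -- walk up to v then to u
        have r1 := theta_reach_seg S i (t.1 + 1) (ℓ i) hts hts le_rfl
          (fun j hj hjs _ => hmem ⟨i, ⟨j, hj⟩⟩ (Or.inr (by simp only; omega)))
        rw [thetaNode_last _ _ (hl i)] at r1
        exact r1.trans rv

lemma treeSet_spanning (hl : ∀ i, 0 < ℓ i) (i₀ : Fin N) (c : Fin N → ℕ)
    (hc : ∀ j, c j < ℓ j) :
    (theta N ℓ).IsSpanningTree (treeSet i₀ c) := by
  constructor
  · -- forest
    rintro ⟨i, j⟩ he x y hxy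
    set S' : Set (theta N ℓ).E :=
      (↑(treeSet i₀ c : Finset (theta N ℓ).E) : Set _) \ {⟨i, j⟩} with hS'def
    have hmem' : ∀ e ∈ S', (e.1 = i₀ ∨ e.2.1 ≠ c e.1) ∧ e ≠ ⟨i, j⟩ := by
      intro e he'
      rw [hS'def] at he'
      exact ⟨mem_treeSet.1 (Finset.mem_coe.1 he'.1), he'.2⟩
    have key : ¬ (theta N ℓ).Reach S' (thetaNode N ℓ i j.1 (Nat.le_of_lt j.isLt))
        (thetaNode N ℓ i (j.1 + 1) j.isLt) := by
      by_cases hi : i = i₀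
      · subst hi
        intro hr
        have := sep1 (fun k => if k = i then j.1 else c k)
          (fun k => by
            show (if k = i then (j : ℕ) else c k) < ℓ k
            split_ifs with h
            · rw [h]; exact j.isLt
            · exact hc k)
          S'
          (fun e he' => by
            obtain ⟨h1, h2⟩ := hmem' e he'
            show e.2.1 ≠ if e.1 = i then (j : ℕ) else c e.1
            by_cases hei : e.1 = i
            · rw [if_pos hei]
              intro hv2
              apply h2
              obtain ⟨e1, e2⟩ := e
              simp only at hei hv2
              subst hei
              exact congrArg _ (Fin.ext hv2)
            · rw [if_neg hei]
              rcases h1 with h | h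
              · exact absurd h hei
              · exact h)
          _ _ hr
        simp only [if_pos rfl, if_true] at this
        omega
      · have hjc : j.1 ≠ c i := by
          rcases mem_treeSet.1 he with h | h
          · exact absurd h hi
          · exact h
        intro hr
        have := sep2 i (min j.1 (c i)) (max j.1 (c i)) (by omega)
          (by have := j.isLt; have := hc i; omega) S'
          (fun e he' hei => by
            obtain ⟨h1, h2⟩ := hmem' e he'
            have hne : e.2.1 ≠ j.1 := by
              intro hv2
              apply h2
              obtain ⟨e1, e2⟩ := e
              simp only at hei hv2
              subst hei
              exact congrArg _ (Fin.ext hv2)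
            have hnc : e.2.1 ≠ c i := by
              rcases h1 with h | h
              · exact absurd (hei.symm.trans h) hi
              · rw [← hei]; exact h
            omega)
          _ _ hr
        simp only [true_and] at this
        have hj1 := j.isLt
        rcases Nat.lt_or_ge j.1 (c i) with hlt | hge
        · rw [iff_iff_implies_and_implies] at this
          omega
        · rw [iff_iff_implies_and_implies] at this
          omega
    have hends : (theta N ℓ).ends ⟨i, j⟩ =
        s(thetaNode N ℓ i j.1 (Nat.le_of_lt j.isLt), thetaNode N ℓ i (j.1 + 1) j.isLt) := rfl
    rw [hends] at hxy
    replace hxy := Sym2.eq_iff.mp hxy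
    rcases hxy with ⟨rfl, rfl⟩ | ⟨rfl, rfl⟩
    · exact key
    · exact fun hr => key ((theta N ℓ).reach_symm _ hr)
  · -- spanning
    intro x y
    exact (treeSet_reach_u hl i₀ c x).trans
      ((theta N ℓ).reach_symm _ (treeSet_reach_u hl i₀ c y))

end ThetaAux

namespace ThetaAux

variable {N : ℕ} {ℓ : Fin N → ℕ}

lemma aux_two_missing {S : Finset (theta N ℓ).E}
    (hT : (theta N ℓ).IsSpanningTree S) (i : Fin N) {t1 t2 : Fin (ℓ i)}
    (hlt : t1.1 < t2.1)
    (h1 : (⟨i, t1⟩ : (theta N ℓ).E) ∉ S) (h2 : (⟨i, t2⟩ : (theta N ℓ).E) ∉ S) :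
    False := by
  have hS : ∀ e ∈ (↑S : Set (theta N ℓ).E), e.1 = i → e.2.1 ≠ t1.1 ∧ e.2.1 ≠ t2.1 := by
    rintro ⟨e1, e2⟩ he hei
    simp only at hei
    subst hei
    refine ⟨fun hv => h1 (by rwa [← show e2 = t1 from Fin.ext hv]),
      fun hv => h2 (by rwa [← show e2 = t2 from Fin.ext hv])⟩
  have hreach := hT.2 (thetaNode N ℓ i 0 (Nat.zero_le _))
    (thetaNode N ℓ i (t1.1 + 1) (by have := t2.isLt; omega))
  have hiff := sep2 i t1.1 t2.1 hlt t2.isLt _ hS _ _ hreach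
  simp only [true_and] at hiff
  omega

lemma at_most_one_missing (hl : ∀ i, 0 < ℓ i) {S : Finset (theta N ℓ).E}
    (hT : (theta N ℓ).IsSpanningTree S) (i : Fin N) {t1 t2 : Fin (ℓ i)}
    (h1 : (⟨i, t1⟩ : (theta N ℓ).E) ∉ S) (h2 : (⟨i, t2⟩ : (theta N ℓ).E) ∉ S) :
    t1 = t2 := by
  rcases Nat.lt_trichotomy t1.1 t2.1 with hlt | heq | hgt
  · exact absurd (aux_two_missing hT i hlt h1 h2) not_false
  · exact Fin.ext heq
  · exact absurd (aux_two_missing hT i hgt h2 h1) not_false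

lemma at_most_one_full (hl : ∀ i, 0 < ℓ i) {S : Finset (theta N ℓ).E}
    (hT : (theta N ℓ).IsSpanningTree S) {i i' : Fin N} (hii : i ≠ i')
    (hfull : ∀ t : Fin (ℓ i), (⟨i, t⟩ : (theta N ℓ).E) ∈ S)
    (hfull' : ∀ t : Fin (ℓ i'), (⟨i', t⟩ : (theta N ℓ).E) ∈ S) : False := by
  set e : (theta N ℓ).E := ⟨i, ⟨0, hl i⟩⟩ with hedef
  set S' : Set (theta N ℓ).E := (↑S : Set _) \ {e} with hS'def
  have hkey := hT.1 e (hfull _) (thetaNode N ℓ i 0 (Nat.zero_le _))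
    (thetaNode N ℓ i (0 + 1) (hl i)) rfl
  apply hkey
  -- path i' gives u → v
  have r1 : (theta N ℓ).Reach S' (Sum.inl false) (Sum.inl true) := by
    have := theta_reach_seg S' i' 0 (ℓ i') (Nat.zero_le _) (Nat.zero_le _) le_rfl
      (fun j hj _ _ => ⟨hfull' ⟨j, hj⟩, by
        intro hmem
        replace hmem := Set.mem_singleton_iff.mp hmem
        rw [hedef] at hmem
        exact hii.symm (congrArg Sigma.fst hmem)⟩)
    rwa [thetaNode_zero, thetaNode_last _ _ (hl i')] at this
  -- path i from 1 gives (node i 1) → v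
  have r2 : (theta N ℓ).Reach S' (thetaNode N ℓ i 1 (hl i)) (Sum.inl true) := by
    have := theta_reach_seg S' i 1 (ℓ i) (hl i) (hl i) le_rfl
      (fun j hj hjs _ => ⟨hfull ⟨j, hj⟩, by
        intro hmem
        replace hmem := Set.mem_singleton_iff.mp hmem
        rw [hedef] at hmem
        injection hmem with hA hB
        have := congrArg Fin.val hB
        simp only at this
        omega⟩)
    rwa [thetaNode_last _ _ (hl i)] at this
  rw [thetaNode_zero]
  exact Relation.ReflTransGen.trans r1 ((theta N ℓ).reach_symm _ r2)

lemma exists_full (hl : ∀ i, 0 < ℓ i) (hN : 0 < N) {S : Finset (theta N ℓ).E}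
    (hT : (theta N ℓ).IsSpanningTree S) :
    ∃ i₀ : Fin N, ∀ t : Fin (ℓ i₀), (⟨i₀, t⟩ : (theta N ℓ).E) ∈ S := by
  by_contra hno
  push_neg at hno
  choose gap hgap using hno
  set i₀ : Fin N := ⟨0, hN⟩
  have hreach := hT.2 (thetaNode N ℓ i₀ 0 (Nat.zero_le _))
    (thetaNode N ℓ i₀ (ℓ i₀) le_rfl)
  have := sep1 (fun k => (gap k).1) (fun k => (gap k).isLt) _
    (fun e he => by
      intro hv
      have : e = ⟨e.1, gap e.1⟩ := by
        obtain ⟨e1, e2⟩ := e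
        exact congrArg _ (Fin.ext hv)
      rw [this] at he
      exact hgap e.1 he)
    _ _ hreach
  have h4 : ((0:ℕ) ≤ (gap i₀).1 ↔ ℓ i₀ ≤ (gap i₀).1) := this
  have := (gap i₀).isLt
  omega

end ThetaAux

namespace ThetaAux

variable {N : ℕ} {ℓ : Fin N → ℕ}

/-- The parametrizing type for spanning trees. -/
def Param (N : ℕ) (ℓ : Fin N → ℕ) : Type :=
  Σ i₀ : Fin N, ∀ j : Fin N, Fin (if j = i₀ then 1 else ℓ j)

instance : Fintype (Param N ℓ) := by unfold Param; infer_instance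

noncomputable def toTree (hl : ∀ i, 0 < ℓ i) (d : Param N ℓ) :
    {S : Finset (theta N ℓ).E // (theta N ℓ).IsSpanningTree S} :=
  ⟨treeSet d.1 (fun j => (d.2 j).1), treeSet_spanning hl d.1 _ (fun j => by
    have h1 := (d.2 j).isLt
    by_cases h : j = d.1
    · have h2 : (if j = d.1 then 1 else ℓ j) = 1 := if_pos h
      have := hl j; omega
    · have h2 : (if j = d.1 then 1 else ℓ j) = ℓ j := if_neg h
      omega)⟩

lemma toTree_bijective (hl : ∀ i, 0 < ℓ i) (hN : 0 < N) :
    Function.Bijective (toTree (ℓ := ℓ) hl) := by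
  constructor
  · -- injective
    rintro ⟨i₀, c⟩ ⟨i₀', c'⟩ hdd
    have hset : (treeSet i₀ (fun j => (c j).1) : Finset (theta N ℓ).E) =
        treeSet i₀' (fun j => (c' j).1) := congrArg Subtype.val hdd
    have hii : i₀ = i₀' := by
      by_contra hne
      have hlt : (c' i₀).1 < ℓ i₀ := by
        have h1 := (c' i₀).isLt
        have h2 : (if i₀ = i₀' then 1 else ℓ i₀) = ℓ i₀ := if_neg hne
        omega
      have hmem1 : (⟨i₀, ⟨(c' i₀).1, hlt⟩⟩ : (theta N ℓ).E) ∈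
          (treeSet i₀ (fun j => (c j).1) : Finset (theta N ℓ).E) :=
        mem_treeSet.2 (Or.inl rfl)
      rw [hset] at hmem1
      rcases mem_treeSet.1 hmem1 with h | h
      · exact hne h
      · exact h rfl
    subst hii
    have hcc : c = c' := by
      funext j
      by_cases hj : j = i₀
      · have b1 := (c j).isLt
        have b2 := (c' j).isLt
        have h2 : (if j = i₀ then 1 else ℓ j) = 1 := if_pos hj
        exact Fin.ext (by omega)
      · have hlt : (c j).1 < ℓ j := by
          have h1 := (c j).isLt
          have h2 : (if j = i₀ then 1 else ℓ j) = ℓ j := if_neg hj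
          omega
        have hnm : (⟨j, ⟨(c j).1, hlt⟩⟩ : (theta N ℓ).E) ∉
            (treeSet i₀ (fun k => (c k).1) : Finset (theta N ℓ).E) := by
          intro hmem
          rcases mem_treeSet.1 hmem with h | h
          · exact hj h
          · exact h rfl
        rw [hset] at hnm
        by_cases hv : (c j).1 = (c' j).1
        · exact Fin.ext hv
        · exact absurd (mem_treeSet.2 (Or.inr hv)) hnm
    rw [hcc]
  · -- surjective
    rintro ⟨S, hT⟩
    obtain ⟨i₀, hfull⟩ := exists_full hl hN hT
    have hmiss : ∀ j : Fin N, j ≠ i₀ → ∃ t : Fin (ℓ j), (⟨j, t⟩ : (theta N ℓ).E) ∉ S := by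
      intro j hj
      by_contra hno
      push_neg at hno
      exact at_most_one_full hl hT hj hno hfull
    choose t ht using hmiss
    refine ⟨⟨i₀, fun j => if h : j = i₀ then ⟨0, by rw [if_pos h]; omega⟩
      else ⟨(t j h).1, by rw [if_neg h]; exact (t j h).isLt⟩⟩, ?_⟩
    apply Subtype.ext
    dsimp only [toTree]
    ext e
    obtain ⟨j, s⟩ := e
    refine Iff.trans mem_treeSet ?_
    constructor
    · rintro (h | h)
      · simp only at h; subst h; exact hfull s
      · by_cases hj : j = i₀
        · subst hj; exact hfull s
        · by_contra hnotin
          apply h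
          rw [dif_neg hj]
          exact congrArg Fin.val (at_most_one_missing hl hT j hnotin (ht j hj))
    · intro hin
      by_cases hj : j = i₀
      · exact Or.inl hj
      · refine Or.inr ?_
        rw [dif_neg hj]
        intro hv
        have hv' : s.1 = (t j hj).1 := hv
        exact (ht j hj) (by rwa [show s = t j hj from Fin.ext hv'] at hin)

theorem theta_treeCount (hl : ∀ i, 0 < ℓ i) (hN : 0 < N) :
    (theta N ℓ).treeCount = ∑ i₀ : Fin N, ∏ j : Fin N, (if j = i₀ then 1 else ℓ j) := by
  have h1 : (theta N ℓ).treeCount = Nat.card (Param N ℓ) :=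
    ((Nat.card_eq_of_bijective _ (toTree_bijective hl hN))).symm
  rw [h1, Nat.card_eq_fintype_card]
  have : Fintype.card (Param N ℓ) =
      ∑ i₀ : Fin N, Fintype.card (∀ j : Fin N, Fin (if j = i₀ then 1 else ℓ j)) := by
    unfold Param
    convert Fintype.card_sigma
  rw [this]
  refine Finset.sum_congr rfl fun i₀ _ => ?_
  rw [Fintype.card_pi]
  exact Finset.prod_congr rfl fun j _ => Fintype.card_fin _

end ThetaAux

namespace ThetaAux

lemma filter_range_lt (m n : ℕ) (hmn : m ≤ n) :
    (Finset.range n).filter (fun j => j < m) = Finset.range m := by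
  ext j
  simp only [Finset.mem_filter, Finset.mem_range]
  omega

lemma prod_f_all (a b m : ℕ) :
    ∏ j ∈ Finset.range (m + m), (if j < m then a else b) = a ^ m * b ^ m := by
  rw [← Finset.prod_range_mul_prod_Ico _ (show m ≤ m + m by omega)]
  congr 1
  · rw [Finset.prod_congr rfl (fun j hj => if_pos (Finset.mem_range.1 hj)),
      Finset.prod_const, Finset.card_range]
  · rw [Finset.prod_congr rfl
      (fun j hj => if_neg (by have := (Finset.mem_Ico.1 hj).1; omega)),
      Finset.prod_const, Nat.card_Ico]
    congr 1
    omega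

lemma count_eval (a b m : ℕ) (ha : 1 ≤ a) (hb : 1 ≤ b) (hm : 1 ≤ m) :
    (∑ i₀ : Fin (m + m), ∏ j : Fin (m + m),
      (if j = i₀ then 1 else if (j : ℕ) < m then a else b))
      = (a + b) * m * (a * b) ^ (m - 1) := by
  set f : ℕ → ℕ := fun j => if j < m then a else b with hf
  have hstep1 : (∑ i₀ : Fin (m + m), ∏ j : Fin (m + m),
      (if j = i₀ then 1 else if (j : ℕ) < m then a else b))
      = ∑ x ∈ Finset.range (m + m), ∏ j ∈ Finset.range (m + m),
        (if j = x then 1 else f j) := by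
    rw [← Fin.sum_univ_eq_sum_range
      (fun x => ∏ j ∈ Finset.range (m + m), (if j = x then 1 else f j)) (m + m)]
    refine Finset.sum_congr rfl fun i₀ _ => ?_
    rw [← Fin.prod_univ_eq_prod_range (fun j => if j = (i₀ : ℕ) then 1 else f j) (m + m)]
    refine Finset.prod_congr rfl fun j _ => ?_
    congr 1
    simp [Fin.ext_iff]
  rw [hstep1]
  have hinner : ∀ x ∈ Finset.range (m + m),
      (∏ j ∈ Finset.range (m + m), (if j = x then 1 else f j))
      = if x < m then a ^ (m - 1) * b ^ m else a ^ m * b ^ (m - 1) := by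
    intro x hx
    have herase : (∏ j ∈ Finset.range (m + m), (if j = x then 1 else f j))
        = ∏ j ∈ (Finset.range (m + m)).erase x, f j := by
      rw [← Finset.mul_prod_erase _ (fun j => if j = x then 1 else f j) hx,
        if_pos rfl, one_mul]
      exact Finset.prod_congr rfl fun j hj =>
        if_neg (Finset.ne_of_mem_erase hj)
    have hall : f x * ∏ j ∈ (Finset.range (m + m)).erase x, f j = a ^ m * b ^ m := by
      rw [Finset.mul_prod_erase _ f hx, prod_f_all]
    obtain ⟨k, rfl⟩ : ∃ k, m = k + 1 := ⟨m - 1, by omega⟩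
    rw [herase]
    by_cases hxm : x < k + 1
    · rw [if_pos hxm]
      have hfx : f x = a := if_pos hxm
      rw [hfx] at hall
      have hr : a * (a ^ (k + 1 - 1) * b ^ (k + 1)) = a ^ (k + 1) * b ^ (k + 1) := by
        rw [show k + 1 - 1 = k from rfl]; ring
      exact Nat.eq_of_mul_eq_mul_left (show 0 < a by omega) (hall.trans hr.symm)
    · rw [if_neg hxm]
      have hfx : f x = b := if_neg hxm
      rw [hfx] at hall
      have hr : b * (a ^ (k + 1) * b ^ (k + 1 - 1)) = a ^ (k + 1) * b ^ (k + 1) := by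
        rw [show k + 1 - 1 = k from rfl]; ring
      exact Nat.eq_of_mul_eq_mul_left (show 0 < b by omega) (hall.trans hr.symm)
  rw [Finset.sum_congr rfl hinner]
  rw [← Finset.sum_range_add_sum_Ico _ (show m ≤ m + m by omega)]
  rw [Finset.sum_congr rfl (fun j hj => if_pos (Finset.mem_range.1 hj)),
    Finset.sum_congr rfl
      (fun j hj => if_neg (by have := (Finset.mem_Ico.1 hj).1; omega : ¬ _ < m)),
    Finset.sum_const, Finset.sum_const, Finset.card_range, Nat.card_Ico,
    smul_eq_mul, smul_eq_mul]
  obtain ⟨k, rfl⟩ : ∃ k, m = k + 1 := ⟨m - 1, by omega⟩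
  rw [show k + 1 + (k + 1) - (k + 1) = k + 1 from by omega,
    show k + 1 - 1 = k from rfl, mul_pow]
  ring

end ThetaAux

/-- For `a, b ≥ 1`: the multigraph `Y` consisting of two vertices joined by `m ≥ 1`
internally disjoint paths of length `a` and `m` of length `b` has exactly
`(a + b) · m · (ab)^{m-1}` spanning trees; in particular, the `n`-th layer of the
degree-`p^n` branched cyclic cover of a cycle of length `a + b`, totally ramified at the
two distinguished vertices with trivial voltage assignment (which is `Y` with `m = p^n`),
has `(a + b) · p^n · (ab)^{p^n - 1}` spanning trees. -/
theorem stmt_12 (a b : ℕ) (ha : 1 ≤ a) (hb : 1 ≤ b) :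
    (∀ m : ℕ, 1 ≤ m → (doubleTheta a b m).treeCount = (a + b) * m * (a * b) ^ (m - 1)) ∧
    (∀ p n : ℕ, p.Prime →
      (doubleTheta a b (p ^ n)).treeCount = (a + b) * p ^ n * (a * b) ^ (p ^ n - 1)) := by
  have main : ∀ m : ℕ, 1 ≤ m →
      (doubleTheta a b m).treeCount = (a + b) * m * (a * b) ^ (m - 1) := by
    intro m hm
    have hl : ∀ i : Fin (m + m), 0 < (if (i : ℕ) < m then a else b) := by
      intro i; split <;> omega
    have := ThetaAux.theta_treeCount (ℓ := fun i : Fin (m + m) => if (i : ℕ) < m then a else b)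
      hl (by omega)
    rw [show doubleTheta a b m
      = theta (m + m) (fun i : Fin (m + m) => if (i : ℕ) < m then a else b) from rfl, this]
    exact ThetaAux.count_eval a b m ha hb hm
  refine ⟨main, fun p n hp => main (p ^ n) (Nat.one_le_pow n p hp.pos)⟩
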